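/- Every weighted system whose weight algebra is a finite, completely idempotent, distributive complete M-monoid with a compatible partial order is closed; more precisely, if (K,⊕,0,Ω,Σ) is a complete and distributive M-monoid such that K is finite, Σ_{i∈I} k = k for every k ∈ K and every nonempty countable index set I, and there is a partial order ⪯ on K such that kᵢ ⪯ ω(k₁,…,k_k) for every ω ∈ Ω, all arguments k₁,…,k_k ∈ K and every i, then every weighted system (N,R,wt,K) is |K|-closed, and in particular closed. -/

import Mathlib

open scoped Classical

/-- Trees over a ranked set `R` with arity function `ar`:
`RT.node r ts` is a tree whose root is labelled `r` and which has `ar r` children. -/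
inductive RT (R : Type) (ar : R → ℕ) : Type
  | node (r : R) (children : Fin (ar r) → RT R ar)

namespace RT

variable {R : Type} {ar : R → ℕ}

/-- The rule labelling the root of a tree. -/
def rootRule : RT R ar → R
  | node r _ => r

/-- The subtree at a position (`none` if the position is not a position of the tree). -/
def subAt : RT R ar → List ℕ → Option (RT R ar)
  | t, [] => some t
  | node r ts, i :: p => if h : i < ar r then subAt (ts ⟨i, h⟩) p else none

/-- Replace the subtree at a position by another tree. -/
def replaceAt : RT R ar → List ℕ → RT R ar → RT R ar
  | _, [], s => s
  | node r ts, i :: p, s => node r fun j => if j.1 = i then replaceAt (ts j) p s else ts j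

/-- The sequence of rule labels from the root to a position, inclusive. -/
def seqTo : RT R ar → List ℕ → Option (List R)
  | node r _, [] => some [r]
  | node r ts, i :: p => if h : i < ar r then (seqTo (ts ⟨i, h⟩) p).map (fun l => r :: l) else none

/-- `p` is a leaf position of `d`, i.e. a valid position with no child positions. -/
def LeafAt (d : RT R ar) (p : List ℕ) : Prop :=
  ∃ t, subAt d p = some t ∧ ar t.rootRule = 0

/-- The height of a tree: `0` on nullary nodes, otherwise `1` plus the maximum height
of the direct subtrees. -/
def height : RT R ar → ℕ
  | node _ ts => Finset.univ.sup fun i => height (ts i) + 1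

end RT

/-- The weight of a tree: evaluate it bottom-up, interpreting each rule `r` by the
operation `wt r`. -/
def wtval {K R : Type} {ar : R → ℕ} (wt : ∀ r : R, (Fin (ar r) → K) → K) : RT R ar → K
  | .node r ts => wt r fun i => wtval wt (ts i)

section Cyclicity

variable {R : Type} {ar : R → ℕ}

/-- A string over `R` is an elementary cycle if it has length `> 1`, its first and last
symbols coincide, and it becomes repetition-free after deleting its last (resp. first)
symbol. -/
def ElementaryCycle (w : List R) : Prop :=
  1 < w.length ∧ w.head? = w.getLast? ∧ w.dropLast.Nodup ∧ w.tail.Nodup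

/-- `ρ` is `(c,w)`-cyclic: `ρ = v₀ w v₁ ⋯ w v_c` (with `c` occurrences of the elementary
cycle `w`) where `w` is not an infix of any `vᵢ`. -/
def CWCyclic (c : ℕ) (w ρ : List R) : Prop :=
  ElementaryCycle w ∧
  ∃ v : ℕ → List R,
    ρ = v 0 ++ (((List.range c).map fun i => w ++ v (i + 1)).flatten) ∧
    ∀ i ≤ c, ¬ w <:+: v i

/-- `ρ` is `c`-cyclic: it is `(c,w)`-cyclic for some elementary cycle `w` and not
`(c',w')`-cyclic for any `c' > c` and elementary cycle `w'`. -/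
def CCyclic (c : ℕ) (ρ : List R) : Prop :=
  (∃ w, CWCyclic c w ρ) ∧ ∀ c', c < c' → ∀ w', ¬ CWCyclic c' w' ρ

/-- The leaf position `p` of `d` is `(c,w)`-cyclic. -/
def LeafCW (c : ℕ) (w : List R) (d : RT R ar) (p : List ℕ) : Prop :=
  RT.LeafAt d p ∧ ∃ ρ, RT.seqTo d p = some ρ ∧ CWCyclic c w ρ

/-- The leaf position `p` of `d` is `c`-cyclic. -/
def LeafC (c : ℕ) (d : RT R ar) (p : List ℕ) : Prop :=
  RT.LeafAt d p ∧ ∃ ρ, RT.seqTo d p = some ρ ∧ CCyclic c ρ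

/-- The tree `d` is `c`-cyclic: some leaf of `d` is `c`-cyclic and no leaf of `d` is
`c'`-cyclic for any `c' > c`. -/
def TreeC (c : ℕ) (d : RT R ar) : Prop :=
  (∃ p, LeafC c d p) ∧ ∀ c', c < c' → ∀ p, ¬ LeafC c' d p

/-- `d ⊢_w d'` : there are positions `p ≤ p'` of `d` whose connecting label sequence is
`w`, and `d'` is obtained by replacing the subtree at `p` by the subtree at `p'`.
(The position `p'` is `p ++ q`.) -/
def CutW (w : List R) (d d' : RT R ar) : Prop :=
  ∃ p q t s, RT.subAt d p = some t ∧ RT.subAt t q = some s ∧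
    RT.seqTo t q = some w ∧ d' = RT.replaceAt d p s

/-- `d ⊢ d'` : `d ⊢_w d'` for some elementary cycle `w`. -/
def Cut (d d' : RT R ar) : Prop := ∃ w, ElementaryCycle w ∧ CutW w d d'

/-- The set of `w`-cutout trees of `d`. -/
def cotreesW (w : List R) (d : RT R ar) : Set (RT R ar) := {d' | Relation.TransGen (CutW w) d d'}

/-- The set of cutout trees of `d`. -/
def cotrees (d : RT R ar) : Set (RT R ar) := {d' | Relation.TransGen Cut d d'}

end Cyclicity

section Rules

variable {N R : Type}

/-- Well-sorted trees over a rule system given by `lhs` and `rhs`: at each node labelled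
`r`, the `i`-th child is a well-sorted tree whose root label has left-hand side equal to
the `i`-th nonterminal of `rhs r`. -/
inductive WellSorted (lhs : R → N) (rhs : R → List N) :
    RT R (fun r => (rhs r).length) → Prop
  | node (r : R) (ts : Fin (rhs r).length → RT R fun r => (rhs r).length)
      (hsort : ∀ i, lhs (ts i).rootRule = (rhs r).get i)
      (hrec : ∀ i, WellSorted lhs rhs (ts i)) : WellSorted lhs rhs (RT.node r ts)

/-- `T_R` : the set of (well-sorted) trees over the rule system. -/
def TRset (lhs : R → N) (rhs : R → List N) : Set (RT R fun r => (rhs r).length) :=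
  {d | WellSorted lhs rhs d}

/-- `(T_R)_A` : the set of trees of sort `A`. -/
def TRA (lhs : R → N) (rhs : R → List N) (A : N) : Set (RT R fun r => (rhs r).length) :=
  {d | WellSorted lhs rhs d ∧ lhs d.rootRule = A}

/-- `T_R^{(c)}` : the set of trees that are `c'`-cyclic for some `c' ≤ c`. -/
def TRcset (lhs : R → N) (rhs : R → List N) (c : ℕ) : Set (RT R fun r => (rhs r).length) :=
  {d | WellSorted lhs rhs d ∧ ∃ c' ≤ c, TreeC c' d}

end Rules

/-- An infinitary sum operation on a commutative monoid `K`, turning it into a complete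
monoid: the sum of the empty family is `0`, the sum of a singleton family is its member,
the sum of a two-element family is the binary sum, and the partition law holds (every
partition of a countable index set `I` into sets indexed by `J` is given by the fibers
of a map `g : I → J`). -/
structure InfSum (K : Type) [AddCommMonoid K] where
  isum : ∀ {I : Type} [Countable I], (I → K) → K
  isum_empty : ∀ {I : Type} [Countable I] (f : I → K), IsEmpty I → isum f = 0
  isum_single : ∀ {I : Type} [Countable I] (f : I → K) (j : I), (∀ i, i = j) → isum f = f j
  isum_pair : ∀ {I : Type} [Countable I] (f : I → K) (j j' : I), j ≠ j' →
    (∀ i, i = j ∨ i = j') → isum f = f j + f j'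
  isum_partition : ∀ {I J : Type} [Countable I] [Countable J] (f : I → K) (g : I → J),
    isum f = isum fun j : J => isum fun i : {i : I // g i = j} => f i.1

section MMonoid

variable {K : Type} [AddCommMonoid K]

/-- A complete monoid is d-complete if, whenever all the partial sums `Σ_{i ≤ n} f i`
eventually equal `k`, the infinitary sum of the family equals `k`. -/
def InfSum.DComplete (S : InfSum K) : Prop :=
  ∀ (k : K) (f : ℕ → K),
    (∃ n₀ : ℕ, ∀ n, n₀ ≤ n → (∑ i ∈ Finset.range (n + 1), f i) = k) → S.isum f = k

/-- A complete monoid is completely idempotent if the infinitary sum of every constant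
family over a nonempty countable index set is that constant. -/
def InfSum.CompletelyIdempotent (S : InfSum K) : Prop :=
  ∀ (I : Type) [Countable I], Nonempty I → ∀ k : K, S.isum (fun _ : I => k) = k

/-- The family `Ω` of operation sets contains all the null (constantly `0`) operations. -/
def HasZeroOps (Ω : ∀ n : ℕ, Set ((Fin n → K) → K)) : Prop :=
  ∀ n : ℕ, (fun _ : Fin n → K => (0 : K)) ∈ Ω n

/-- Distributivity of an M-monoid: every operation in `Ω` distributes over `+` in each
argument, and `0` is absorbing for every operation in `Ω`. -/
def DistributiveOps (Ω : ∀ n : ℕ, Set ((Fin n → K) → K)) : Prop :=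
  ∀ n : ℕ, ∀ ω ∈ Ω n,
    (∀ (x : Fin n → K) (i : Fin n) (a b : K),
      ω (Function.update x i (a + b)) = ω (Function.update x i a) + ω (Function.update x i b)) ∧
    (∀ x : Fin n → K, (∃ i, x i = 0) → ω x = 0)

end MMonoid

/-- The weighted system `(N, R, wt, K)` is `c`-closed: for every well-sorted tree `d` and
elementary cycle `w` such that some leaf position of `d` is `(c+1,w)`-cyclic, the weight
of `d` is subsumed by the (finite) `⊕`-sum of the weights of the `w`-cutout trees of `d`. -/
def CClosed {K : Type} [AddCommMonoid K] {N R : Type} (lhs : R → N) (rhs : R → List N)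
    (wt : ∀ r : R, (Fin (rhs r).length → K) → K) (c : ℕ) : Prop :=
  ∀ d : RT R (fun r => (rhs r).length), WellSorted lhs rhs d →
    ∀ w : List R, ElementaryCycle w → (∃ p, LeafCW (c + 1) w d p) →
      (wtval wt d + ∑ᶠ d' ∈ cotreesW w d, wtval wt d') = ∑ᶠ d' ∈ cotreesW w d, wtval wt d'


section Aux
namespace RTaux
open RT
variable {R : Type} {ar : R → ℕ}

def sz : RT R ar → ℕ
  | .node r ts => 1 + ∑ i, sz (ts i)

theorem sz_pos (d : RT R ar) : 0 < sz d := by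
  cases d; rw [sz]; omega

theorem seqTo_length : ∀ (p : List ℕ) (d : RT R ar) (l : List R),
    RT.seqTo d p = some l → l.length = p.length + 1
  | [], .node r ts, l, h => by
      rw [RT.seqTo] at h; cases h; simp
  | i :: p, .node r ts, l, h => by
      rw [RT.seqTo] at h
      split at h
      · simp only [Option.map_eq_some_iff] at h
        obtain ⟨l', h1, rfl⟩ := h
        simp [seqTo_length p _ _ h1]
      · cases h

theorem subAt_append : ∀ (p q : List ℕ) (d : RT R ar),
    RT.subAt d (p ++ q) = (RT.subAt d p).bind (fun t => RT.subAt t q)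
  | [], q, d => by simp [RT.subAt]
  | i :: p, q, .node r ts => by
      simp only [List.cons_append, RT.subAt]
      split
      · exact subAt_append p q _
      · simp

theorem seqTo_split : ∀ (a b : List ℕ) (d : RT R ar) (l : List R),
    RT.seqTo d (a ++ b) = some l →
    ∃ t, RT.subAt d a = some t ∧ RT.seqTo t b = some (l.drop a.length)
  | [], b, d, l, h => ⟨d, by simp [RT.subAt], by simpa using h⟩
  | i :: a, b, .node r ts, l, h => by
      rw [List.cons_append, RT.seqTo] at h
      split at h
      · simp only [Option.map_eq_some_iff] at h
        obtain ⟨l', h1, rfl⟩ := h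
        obtain ⟨t, ht1, ht2⟩ := seqTo_split a b _ _ h1
        exact ⟨t, by rw [RT.subAt]; simp [*], by simpa using ht2⟩
      · cases h

theorem seqTo_take : ∀ (q : List ℕ) (d : RT R ar) (l : List R) (m : ℕ),
    RT.seqTo d q = some l → RT.seqTo d (q.take m) = some (l.take (m + 1))
  | q, d, l, 0, h => by
      cases d with
      | node r ts =>
        cases q with
        | nil =>
          simp only [RT.seqTo] at h
          cases h
          simp [RT.seqTo]
        | cons i p =>
          rw [RT.seqTo] at h
          split at h
          · simp only [Option.map_eq_some_iff] at h
            obtain ⟨l', h1, rfl⟩ := h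
            simp [RT.seqTo]
          · cases h
  | q, d, l, m + 1, h => by
      cases d with
      | node r ts =>
        cases q with
        | nil =>
          simp only [RT.seqTo] at h
          cases h
          simp [RT.seqTo]
        | cons i p =>
          rw [RT.seqTo] at h
          split at h
          · simp only [Option.map_eq_some_iff] at h
            obtain ⟨l', h1, rfl⟩ := h
            simp only [List.take_succ_cons, RT.seqTo]
            rw [dif_pos ‹_›, seqTo_take p _ _ m h1]
            simp
          · cases h

theorem seqTo_subAt : ∀ (q : List ℕ) (d : RT R ar) (l : List R),
    RT.seqTo d q = some l → ∃ t, RT.subAt d q = some t := by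
  intro q d l h
  obtain ⟨t, ht, -⟩ := seqTo_split q [] d l (by simpa using h)
  exact ⟨t, ht⟩

theorem sz_subAt_le : ∀ (q : List ℕ) (d t : RT R ar),
    RT.subAt d q = some t → sz t ≤ sz d
  | [], d, t, h => by simp only [RT.subAt] at h; cases h; exact le_rfl
  | i :: q, .node r ts, t, h => by
      rw [RT.subAt] at h
      split at h
      case isTrue hi =>
        have h1 : sz t ≤ sz (ts ⟨i, hi⟩) := sz_subAt_le q _ t h
        have h2 : sz (ts ⟨i, hi⟩) ≤ ∑ j, sz (ts j) :=
          Finset.single_le_sum (f := fun j => sz (ts j)) (fun j _ => Nat.zero_le _)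
            (Finset.mem_univ _)
        have h3 : sz (.node r ts : RT R ar) = 1 + ∑ j, sz (ts j) := by rw [sz]
        omega
      · cases h

theorem sz_subAt_lt : ∀ (q : List ℕ) (d t : RT R ar), q ≠ [] →
    RT.subAt d q = some t → sz t < sz d
  | [], d, t, hq, h => absurd rfl hq
  | i :: q, .node r ts, t, _, h => by
      rw [RT.subAt] at h
      split at h
      case isTrue hi =>
        have h1 : sz t ≤ sz (ts ⟨i, hi⟩) := sz_subAt_le q _ t h
        have h2 : sz (ts ⟨i, hi⟩) ≤ ∑ j, sz (ts j) :=
          Finset.single_le_sum (f := fun j => sz (ts j)) (fun j _ => Nat.zero_le _)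
            (Finset.mem_univ _)
        have h3 : sz (.node r ts : RT R ar) = 1 + ∑ j, sz (ts j) := by rw [sz]
        omega
      · cases h

theorem sz_replaceAt_lt : ∀ (p : List ℕ) (d t s : RT R ar),
    RT.subAt d p = some t → sz s < sz t → sz (RT.replaceAt d p s) < sz d
  | [], d, t, s, h, hs => by simp only [RT.subAt] at h; cases h; simpa [RT.replaceAt] using hs
  | i :: p, .node r ts, t, s, h, hs => by
      rw [RT.subAt] at h
      split at h
      case isTrue hi =>
        rw [RT.replaceAt, sz, sz]
        have key : ∑ j, sz (if j.1 = i then RT.replaceAt (ts j) p s else ts j)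
            < ∑ j, sz (ts j) := by
          apply Finset.sum_lt_sum
          · intro j _
            by_cases hj : j.1 = i
            · have hje : j = ⟨i, hi⟩ := Fin.ext hj
              subst hje
              simp only [if_pos hj]
              exact (sz_replaceAt_lt p _ t s h hs).le
            · simp [hj]
          · exact ⟨⟨i, hi⟩, Finset.mem_univ _, by
              simp only [if_pos rfl]
              exact sz_replaceAt_lt p _ t s h hs⟩
        omega
      · cases h

end RTaux

namespace RTaux
variable {R : Type} {ar : R → ℕ}

theorem sz_child_le {r : R} {ts : Fin (ar r) → RT R ar} {n : ℕ}
    (h : sz (.node r ts) ≤ n + 1) (i : Fin (ar r)) : sz (ts i) ≤ n := by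
  rw [sz] at h
  have h2 : sz (ts i) ≤ ∑ j, sz (ts j) :=
    Finset.single_le_sum (f := fun j => sz (ts j)) (fun j _ => Nat.zero_le _) (Finset.mem_univ _)
  omega

def childMap (n : ℕ) : {t : RT R ar // sz t ≤ n + 1} →
    Σ r : R, (Fin (ar r) → {t : RT R ar // sz t ≤ n})
  | ⟨.node r ts, h⟩ => ⟨r, fun i => ⟨ts i, sz_child_le h i⟩⟩

theorem childMap_inj (n : ℕ) : Function.Injective (childMap (R := R) (ar := ar) n) := by
  rintro ⟨⟨r, ts⟩, h⟩ ⟨⟨r', ts'⟩, h'⟩ heq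
  simp only [childMap] at heq
  obtain ⟨rfl, h2⟩ := Sigma.mk.inj_iff.mp heq
  have h3 := eq_of_heq h2
  have h4 : ts = ts' := funext fun i => congrArg Subtype.val (congrFun h3 i)
  subst h4
  rfl

theorem finite_sz_le [Finite R] : ∀ n : ℕ, {t : RT R ar | sz t ≤ n}.Finite
  | 0 => by
      convert Set.finite_empty
      ext t
      have := sz_pos t
      simp only [Set.mem_setOf_eq, Set.mem_empty_iff_false, iff_false]
      omega
  | n + 1 => by
      have IH : Finite {t : RT R ar // sz t ≤ n} := (finite_sz_le n).to_subtype
      exact Set.finite_coe_iff.mp (Finite.of_injective _ (childMap_inj (R := R) (ar := ar) n))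

variable {K : Type}

theorem wtval_replaceAt (wt : ∀ r : R, (Fin (ar r) → K) → K) :
    ∀ (p : List ℕ) (d t s : RT R ar), RT.subAt d p = some t →
    wtval wt s = wtval wt t → wtval wt (RT.replaceAt d p s) = wtval wt d
  | [], d, t, s, h, hs => by
      simp only [RT.subAt] at h; cases h
      simpa [RT.replaceAt] using hs
  | i :: p, .node r ts, t, s, h, hs => by
      rw [RT.subAt] at h
      split at h
      case isTrue hi =>
        rw [RT.replaceAt, wtval, wtval]
        congr 1
        funext j
        by_cases hj : j.1 = i
        · have hje : j = ⟨i, hi⟩ := Fin.ext hj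
          subst hje
          simp only [if_pos hj]
          exact wtval_replaceAt wt p _ t s h hs
        · simp [hj]
      · cases h

theorem wtval_le [Preorder K] (wt : ∀ r : R, (Fin (ar r) → K) → K)
    (hm : ∀ (r : R) (x : Fin (ar r) → K) (i : Fin (ar r)), x i ≤ wt r x) :
    ∀ (q : List ℕ) (d t : RT R ar), RT.subAt d q = some t → wtval wt t ≤ wtval wt d
  | [], d, t, h => by simp only [RT.subAt] at h; cases h; exact le_rfl
  | i :: q, .node r ts, t, h => by
      rw [RT.subAt] at h
      split at h
      case isTrue hi =>
        calc wtval wt t ≤ wtval wt (ts ⟨i, hi⟩) := wtval_le wt hm q _ t h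
          _ ≤ wtval wt (.node r ts) := by rw [wtval]; exact hm r (fun j => wtval wt (ts j)) ⟨i, hi⟩
      · cases h

theorem flat_split {α : Type} (g : ℕ → List α) :
    ∀ c i, i ≤ c → ∃ rest, ((List.range (c + 1)).map g).flatten
      = ((List.range i).map g).flatten ++ g i ++ rest := by
  intro c
  induction c with
  | zero =>
      intro i hi
      interval_cases i
      exact ⟨[], by rw [List.range_succ (n := 0)]; simp⟩
  | succ c ih =>
      intro i hi
      rcases Nat.lt_or_ge i (c + 1) with h | h
      · obtain ⟨rest, hr⟩ := ih i (by omega)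
        refine ⟨rest ++ g (c + 1), ?_⟩
        rw [List.range_succ (n := c + 1), List.map_append, List.flatten_append, hr]
        simp [List.append_assoc]
      · have hie : i = c + 1 := by omega
        subst hie
        exact ⟨[], by rw [List.range_succ (n := c + 1)]; simp⟩

end RTaux

end Aux

/-- Every weighted system whose weight algebra is a finite, completely idempotent,
distributive complete M-monoid equipped with a partial order under which every operation
in `Ω` dominates each of its arguments is `|K|`-closed, and in particular closed. -/
theorem finite_idempotent_implies_closed {N R K : Type} [Fintype N] [Nonempty N] [Fintype R]
    [Fintype K] [PartialOrder K] [AddCommMonoid K]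
    (S : InfSum K) (hidem : S.CompletelyIdempotent)
    (Ω : ∀ n : ℕ, Set ((Fin n → K) → K)) (hΩ0 : HasZeroOps Ω) (hΩd : DistributiveOps Ω)
    (hmono : ∀ n : ℕ, ∀ ω ∈ Ω n, ∀ (x : Fin n → K) (i : Fin n), x i ≤ ω x)
    (lhs : R → N) (rhs : R → List N)
    (wt : ∀ r : R, (Fin (rhs r).length → K) → K) (hwt : ∀ r : R, wt r ∈ Ω (rhs r).length) :
    CClosed lhs rhs wt (Fintype.card K) ∧ ∃ c : ℕ, CClosed lhs rhs wt c := by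
  classical
  have hadd : ∀ k : K, k + k = k := by
    intro k
    have h1 := S.isum_pair (I := Bool) (fun _ => k) true false (by decide)
      (fun i => by cases i
                   · exact Or.inr rfl
                   · exact Or.inl rfl)
    have h2 := hidem Bool ⟨true⟩ k
    rw [h1] at h2
    exact h2
  have hm : ∀ (r : R) (x : Fin (rhs r).length → K) (i : Fin (rhs r).length), x i ≤ wt r x :=
    fun r x i => hmono _ (wt r) (hwt r) x i
  have key : CClosed lhs rhs wt (Fintype.card K) := by
    intro d _hws w hw hleaf
    set c := Fintype.card K with hc
    obtain ⟨p, _, ρ, hseq, _, v, hρ, -⟩ := hleaf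
    have hwlen : 1 < w.length := hw.1
    have hρlen : ρ.length = p.length + 1 := RTaux.seqTo_length p d ρ hseq
    set g : ℕ → List R := fun i => w ++ v (i + 1) with hg
    set m : ℕ → ℕ := fun i => (v 0 ++ ((List.range i).map g).flatten).length with hmdef
    have hPsucc : ∀ i, m (i + 1) = m i + w.length + (v (i + 1)).length := by
      intro i
      simp only [hmdef, List.range_succ, List.map_append, List.flatten_append,
        List.length_append, List.map_cons, List.map_nil, List.flatten_cons,
        List.flatten_nil, hg]
      simp [List.length_append]
      omega
    have hmono2 : Monotone m := monotone_nat_of_le_succ fun i => by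
      have := hPsucc i; omega
    have hgap : ∀ i j : ℕ, i < j → m i + w.length ≤ m j := by
      intro i j hij
      have h1 := hPsucc i
      have h2 := hmono2 (show i + 1 ≤ j by omega)
      omega
    have hblock : ∀ i ≤ c, ∃ rest, ρ = (v 0 ++ ((List.range i).map g).flatten) ++ w ++ rest := by
      intro i hi
      obtain ⟨rest, hr⟩ := RTaux.flat_split g c i hi
      refine ⟨v (i + 1) ++ rest, ?_⟩
      rw [hρ, hr]
      simp [hg, List.append_assoc]
    have getT : ∀ i : Fin (c + 1),
        ∃ t t' : RT R (fun r => (rhs r).length),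
          RT.subAt d (p.take (m i.1)) = some t ∧
          RT.subAt t ((p.drop (m i.1)).take (w.length - 1)) = some t' ∧
          RT.seqTo t ((p.drop (m i.1)).take (w.length - 1)) = some w := by
      intro i
      obtain ⟨rest, hr⟩ := hblock i.1 (by omega)
      have hlA : m i.1 = (v 0 ++ ((List.range i.1).map g).flatten).length := by rw [hmdef]
      have hlen : m i.1 + w.length ≤ ρ.length := by
        rw [hr]
        simp only [List.length_append, hlA]
        omega
      have hmi : m i.1 ≤ p.length := by omega
      have htk : (p.take (m i.1)).length = m i.1 := by rw [List.length_take]; omega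
      obtain ⟨t, hsub, hseqt⟩ := RTaux.seqTo_split (p.take (m i.1)) (p.drop (m i.1)) d ρ
        (by rwa [List.take_append_drop])
      rw [htk] at hseqt
      have hdropρ : ρ.drop (m i.1) = w ++ rest := by
        rw [hr, List.append_assoc, hlA]
        exact List.drop_left
      have hseqQ := RTaux.seqTo_take (p.drop (m i.1)) t _ (w.length - 1) hseqt
      rw [hdropρ] at hseqQ
      have htkw : (w ++ rest).take (w.length - 1 + 1) = w := by
        rw [show w.length - 1 + 1 = w.length by omega]
        exact List.take_left
      rw [htkw] at hseqQ
      obtain ⟨t', ht'⟩ := RTaux.seqTo_subAt _ t w hseqQ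
      exact ⟨t, t', hsub, ht', hseqQ⟩
    choose T T' hT1 hT2 hT3 using getT
    have main2 : ∀ i j : Fin (c + 1), i.1 < j.1 → wtval wt (T i) = wtval wt (T j) →
        ∃ d', d' ∈ cotreesW w d ∧ wtval wt d' = wtval wt d := by
      intro i j hij hw2
      have hgap2 : m i.1 + w.length ≤ m j.1 := hgap _ _ hij
      have hd1 : p.take (m j.1) = p.take (m i.1) ++ ((p.drop (m i.1)).take (m j.1 - m i.1)) := by
        rw [show m j.1 = m i.1 + (m j.1 - m i.1) by omega, List.take_add]
        congr 2
        omega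
      have hd2 : (p.drop (m i.1)).take (m j.1 - m i.1)
          = (p.drop (m i.1)).take (w.length - 1)
            ++ (((p.drop (m i.1)).drop (w.length - 1)).take
                  (m j.1 - m i.1 - (w.length - 1))) := by
        rw [show m j.1 - m i.1 = (w.length - 1) + (m j.1 - m i.1 - (w.length - 1)) by omega,
          List.take_add]
        congr 2
        omega
      have h0 := hT1 j
      rw [hd1, hd2] at h0
      rw [RTaux.subAt_append, hT1 i] at h0
      simp only [Option.bind_some] at h0
      rw [RTaux.subAt_append, hT2 i] at h0
      simp only [Option.bind_some] at h0
      have hle1 : wtval wt (T j) ≤ wtval wt (T' i) := RTaux.wtval_le wt hm _ _ _ h0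
      have hle2 : wtval wt (T' i) ≤ wtval wt (T i) := RTaux.wtval_le wt hm _ _ _ (hT2 i)
      have heq2 : wtval wt (T' i) = wtval wt (T i) :=
        le_antisymm hle2 (by rw [hw2]; exact hle1)
      refine ⟨RT.replaceAt d (p.take (m i.1)) (T' i), ?_, ?_⟩
      · exact Relation.TransGen.single
          ⟨p.take (m i.1), (p.drop (m i.1)).take (w.length - 1), T i, T' i,
            hT1 i, hT2 i, hT3 i, rfl⟩
      · exact RTaux.wtval_replaceAt wt _ d (T i) (T' i) (hT1 i) heq2
    obtain ⟨i, j, hne, heq⟩ := Fintype.exists_ne_map_eq_of_card_lt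
      (fun i : Fin (c + 1) => wtval wt (T i)) (by rw [Fintype.card_fin]; omega)
    have hex : ∃ d', d' ∈ cotreesW w d ∧ wtval wt d' = wtval wt d := by
      rcases Ne.lt_or_gt hne with h | h
      · exact main2 i j h heq
      · exact main2 j i h heq.symm
    obtain ⟨d', hd'mem, hd'wt⟩ := hex
    have hstep : ∀ x y : RT R (fun r => (rhs r).length),
        CutW w x y → RTaux.sz y < RTaux.sz x := by
      rintro x y ⟨p1, q1, t1, s1, h1, h2, h3, rfl⟩
      have hlq := RTaux.seqTo_length q1 t1 w h3
      have hq : q1 ≠ [] := by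
        intro hq
        subst hq
        simp at hlq
        omega
      exact RTaux.sz_replaceAt_lt p1 x t1 s1 h1 (RTaux.sz_subAt_lt q1 t1 s1 hq h2)
    have hfin : (cotreesW w d).Finite := by
      apply (RTaux.finite_sz_le (RTaux.sz d)).subset
      intro x hx
      have hx' : Relation.TransGen (CutW w) d x := hx
      have hlt : RTaux.sz x < RTaux.sz d := by
        induction hx' with
        | single h => exact hstep _ _ h
        | tail h1 h2 ih => exact lt_trans (hstep _ _ h2) (ih h1)
      exact le_of_lt hlt
    rw [← hfin.coe_toFinset, finsum_mem_coe_finset]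
    have hmem : d' ∈ hfin.toFinset := hfin.mem_toFinset.mpr hd'mem
    rw [← Finset.add_sum_erase _ (fun x => wtval wt x) hmem]
    rw [hd'wt, ← add_assoc, hadd]
  exact ⟨key, Fintype.card K, key⟩
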